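/- For p ≥ 3 even, c > 0 and t > 0, the principal-value limit lim_{R→∞} (1/2π) ∫_{-R}^{R} e^{ikx} e^{ict k^p} dk exists and equals (e^{iπ/(2p)}/2π) ∫_ℝ exp(i e^{iπ/(2p)} k x) exp(-ct k^p) dk, where the latter integral is absolutely convergent. -/

import Mathlib

open MeasureTheory Real Complex Filter intervalIntegral


lemma entire_exists_primitive (f : ℂ → ℂ) (hf : Differentiable ℂ f) :
    ∃ F : ℂ → ℂ, ∀ z, HasDerivAt F (f z) z := by
  have hderiv : Continuous (deriv f) := (hf.contDiff (n := 1)).continuous_deriv le_rfl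
  have hlin : ∀ z₀ : ℂ, Continuous fun t : ℝ => (t:ℂ) * z₀ := fun z₀ =>
    Complex.continuous_ofReal.mul continuous_const
  refine ⟨fun z => z * ∫ t in (0:ℝ)..1, f ((t : ℂ) * z), fun z₀ => ?_⟩
  have key : HasDerivAt (fun z : ℂ => ∫ t in (0:ℝ)..1, f ((t : ℂ) * z))
      (∫ t in (0:ℝ)..1, (t : ℂ) * deriv f ((t : ℂ) * z₀)) z₀ := by
    obtain ⟨C, hC⟩ := (isCompact_closedBall (0:ℂ) (‖z₀‖+1)).exists_bound_of_continuousOn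
      hderiv.continuousOn
    have := intervalIntegral.hasDerivAt_integral_of_dominated_loc_of_deriv_le
      (F := fun (z : ℂ) (t : ℝ) => f ((t:ℂ) * z))
      (F' := fun (z : ℂ) (t : ℝ) => (t : ℂ) * deriv f ((t:ℂ) * z))
      (x₀ := z₀) (s := Metric.ball z₀ 1) (bound := fun _ => C) (a := (0:ℝ)) (b := 1)
      (μ := MeasureTheory.volume) (Metric.ball_mem_nhds z₀ one_pos) ?_ ?_ ?_ ?_ ?_ ?_
    · exact this.2
    · filter_upwards with z
      exact ((hf.continuous.comp (hlin z)).aestronglyMeasurable)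
    · exact (hf.continuous.comp (hlin z₀)).intervalIntegrable 0 1
    · exact (Complex.continuous_ofReal.mul (hderiv.comp (hlin z₀))).aestronglyMeasurable
    · filter_upwards with t ht z hz
      rw [Set.uIoc_of_le (by norm_num : (0:ℝ) ≤ 1)] at ht
      have h1 : ‖(t:ℂ)‖ ≤ 1 := by
        rw [Complex.norm_real]
        exact abs_le.mpr ⟨by linarith [ht.1], ht.2⟩
      have h2 : (t:ℂ) * z ∈ Metric.closedBall (0:ℂ) (‖z₀‖ + 1) := by
        rw [Metric.mem_closedBall, dist_zero_right]
        calc ‖(t:ℂ) * z‖ ≤ 1 * ‖z‖ := by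
              rw [norm_mul]; exact mul_le_mul_of_nonneg_right h1 (norm_nonneg _)
          _ ≤ ‖z₀‖ + 1 := by
              rw [one_mul]
              linarith [le_of_lt (mem_ball_iff_norm.mp hz), norm_sub_norm_le z z₀]
      calc ‖(t:ℂ) * deriv f ((t:ℂ) * z)‖ = ‖(t:ℂ)‖ * ‖deriv f ((t:ℂ)*z)‖ := norm_mul _ _
        _ ≤ 1 * C := mul_le_mul h1 (hC _ h2) (norm_nonneg _) zero_le_one
        _ = C := one_mul C
    · exact intervalIntegrable_const
    · filter_upwards with t ht z hz
      have h := (hf.differentiableAt.hasDerivAt).comp z ((hasDerivAt_id z).const_mul (t:ℂ))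
      simpa [Function.comp_def, mul_comm] using h
  have hprod : HasDerivAt (fun z : ℂ => z * ∫ t in (0:ℝ)..1, f ((t : ℂ) * z))
      ((∫ t in (0:ℝ)..1, f ((t : ℂ) * z₀)) + z₀ * ∫ t in (0:ℝ)..1, (t : ℂ) * deriv f ((t : ℂ) * z₀)) z₀ := by
    simpa [Pi.mul_def] using (hasDerivAt_id z₀).mul key
  have ftc : (∫ t in (0:ℝ)..1, (f ((t:ℂ) * z₀) + (t:ℂ) * (deriv f ((t:ℂ)*z₀) * z₀))) = f z₀ := by
    have h : ∀ t ∈ Set.uIcc (0:ℝ) 1, HasDerivAt (fun s : ℝ => (s:ℂ) * f ((s:ℂ) * z₀))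
        (f ((t:ℂ) * z₀) + (t:ℂ) * (deriv f ((t:ℂ)*z₀) * z₀)) t := by
      intro t _
      have hc : HasDerivAt (fun w : ℂ => f (w * z₀)) (deriv f ((t:ℂ)*z₀) * z₀) (t:ℂ) := by
        have := (hf.differentiableAt.hasDerivAt).comp (t:ℂ) ((hasDerivAt_id ((t:ℂ))).mul_const z₀)
        simpa [Function.comp_def] using this
      have h1 : HasDerivAt (fun w : ℂ => w * f (w * z₀))
          (f ((t:ℂ) * z₀) + (t:ℂ) * (deriv f ((t:ℂ)*z₀) * z₀)) (t:ℂ) := by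
        simpa [Pi.mul_def] using (hasDerivAt_id (t:ℂ)).mul hc
      exact h1.comp_ofReal
    have hcont : IntervalIntegrable (fun t : ℝ => f ((t:ℂ) * z₀) + (t:ℂ) * (deriv f ((t:ℂ)*z₀) * z₀))
        MeasureTheory.volume 0 1 :=
      ((hf.continuous.comp (hlin z₀)).add (Complex.continuous_ofReal.mul
        ((hderiv.comp (hlin z₀)).mul continuous_const))).intervalIntegrable 0 1
    simpa using intervalIntegral.integral_eq_sub_of_hasDerivAt h hcont
  have hcont1 : Continuous fun t : ℝ => f ((t:ℂ) * z₀) := hf.continuous.comp (hlin z₀)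
  have hcont2 : Continuous fun t : ℝ => (t:ℂ) * (deriv f ((t:ℂ)*z₀) * z₀) :=
    Complex.continuous_ofReal.mul ((hderiv.comp (hlin z₀)).mul continuous_const)
  rw [intervalIntegral.integral_add (hcont1.intervalIntegrable 0 1)
      (hcont2.intervalIntegrable 0 1)] at ftc
  have hmul : z₀ * ∫ t in (0:ℝ)..1, (t:ℂ) * deriv f ((t:ℂ)*z₀)
      = ∫ t in (0:ℝ)..1, (t:ℂ) * (deriv f ((t:ℂ)*z₀) * z₀) := by
    rw [← intervalIntegral.integral_const_mul]
    apply intervalIntegral.integral_congr; intro t _; ring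
  rw [show f z₀ = (∫ t in (0:ℝ)..1, f ((t:ℂ) * z₀)) + z₀ * ∫ t in (0:ℝ)..1, (t:ℂ) * deriv f ((t:ℂ)*z₀) by
    rw [hmul, ← ftc]]
  exact hprod

lemma rotate_contour (f : ℂ → ℂ) (hf : Differentiable ℂ f) (R α : ℝ) :
    Complex.exp (↑α * I) * (∫ k in (0:ℝ)..R, f (Complex.exp (↑α * I) * ↑k))
      - ∫ k in (0:ℝ)..R, f ↑k
    = I * ∫ θ in (0:ℝ)..α, ↑R * Complex.exp (↑θ * I) * f (↑R * Complex.exp (↑θ * I)) := by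
  obtain ⟨F, hF⟩ := entire_exists_primitive f hf
  set w : ℂ := Complex.exp (↑α * I) with hw
  have h1 : (∫ k in (0:ℝ)..R, f ↑k) = F R - F 0 := by
    apply intervalIntegral.integral_eq_sub_of_hasDerivAt
    · intro k _; exact (hF _).comp_ofReal
    · exact (hf.continuous.comp Complex.continuous_ofReal).intervalIntegrable _ _
  have h2 : (∫ k in (0:ℝ)..R, w * f (w * ↑k)) = F (w * R) - F 0 := by
    have := intervalIntegral.integral_eq_sub_of_hasDerivAt
      (f := fun k : ℝ => F (w * ↑k)) (f' := fun k : ℝ => w * f (w * ↑k)) (a := 0) (b := R) ?_ ?_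
    · simpa using this
    · intro k _
      have hin : HasDerivAt (fun z : ℂ => F (w * z)) (w * f (w * ↑k)) ↑k := by
        have := (hF (w * ↑k)).comp (↑k : ℂ) ((hasDerivAt_id ((k:ℝ) : ℂ)).const_mul w)
        simpa [Function.comp_def, mul_comm] using this
      exact hin.comp_ofReal
    · apply Continuous.intervalIntegrable
      exact continuous_const.mul (hf.continuous.comp (continuous_const.mul Complex.continuous_ofReal))
  have h3 : (∫ θ in (0:ℝ)..α, I * (↑R * Complex.exp (↑θ * I) * f (↑R * Complex.exp (↑θ * I))))
      = F (↑R * w) - F R := by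
    have := intervalIntegral.integral_eq_sub_of_hasDerivAt
      (f := fun θ : ℝ => F (↑R * Complex.exp (↑θ * I)))
      (f' := fun θ : ℝ => I * (↑R * Complex.exp (↑θ * I) * f (↑R * Complex.exp (↑θ * I))))
      (a := 0) (b := α) ?_ ?_
    · simpa [hw] using this
    · intro θ _
      have hin : HasDerivAt (fun z : ℂ => F (↑R * Complex.exp (z * I)))
          (I * (↑R * Complex.exp ((θ:ℂ) * I) * f (↑R * Complex.exp ((θ:ℂ) * I)))) ((θ:ℝ) : ℂ) := by
        have hg : HasDerivAt (fun z : ℂ => ↑R * Complex.exp (z * I))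
            (↑R * (Complex.exp ((θ:ℂ) * I) * I)) ((θ:ℝ) : ℂ) := by
          simpa using (((hasDerivAt_id ((θ:ℝ):ℂ)).mul_const I).cexp).const_mul (R:ℂ)
        have := (hF (↑R * Complex.exp ((θ:ℂ) * I))).comp ((θ:ℝ):ℂ) hg
        simp only [Function.comp_def] at this
        refine this.congr_deriv ?_
        ring
      exact hin.comp_ofReal
    · apply Continuous.intervalIntegrable
      apply continuous_const.mul
      apply Continuous.mul
      · exact continuous_const.mul (Complex.continuous_exp.comp (Complex.continuous_ofReal.mul continuous_const))
      · exact hf.continuous.comp (continuous_const.mul (Complex.continuous_exp.comp (Complex.continuous_ofReal.mul continuous_const)))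
  have hpull : w * (∫ k in (0:ℝ)..R, f (w * ↑k)) = ∫ k in (0:ℝ)..R, w * f (w * ↑k) :=
    (intervalIntegral.integral_const_mul _ _).symm
  have hpull2 : I * (∫ θ in (0:ℝ)..α, ↑R * Complex.exp (↑θ * I) * f (↑R * Complex.exp (↑θ * I)))
      = ∫ θ in (0:ℝ)..α, I * (↑R * Complex.exp (↑θ * I) * f (↑R * Complex.exp (↑θ * I))) :=
    (intervalIntegral.integral_const_mul _ _).symm
  rw [hpull, hpull2, h1, h2, h3, mul_comm w (R:ℂ)]
  ring

lemma arc_tendsto (p : ℕ) (hp : 3 ≤ p) (hpeven : Even p) (c t x : ℝ) (hc : 0 < c) (ht : 0 < t)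
    (σ : ℝ) (hσ : σ = 1 ∨ σ = -1) :
    Tendsto (fun R : ℝ => I * ∫ θ in (0:ℝ)..(π/(2*(p:ℝ))),
      (R:ℂ) * Complex.exp ((θ:ℂ)*I) *
      (Complex.exp (I*((σ:ℂ)*((R:ℂ) * Complex.exp ((θ:ℂ)*I)))*(x:ℂ)) *
       Complex.exp (I*(c:ℂ)*(t:ℂ)*((σ:ℂ)*((R:ℂ) * Complex.exp ((θ:ℂ)*I)))^p)))
      atTop (nhds 0) := by
  have hppos : 0 < (p:ℝ) := by positivity
  have hp3 : (3:ℝ) ≤ (p:ℝ) := by exact_mod_cast hp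
  set α : ℝ := π/(2*(p:ℝ)) with hα
  have hπ := Real.pi_pos
  have hα_pos : 0 < α := by positivity
  have hpα : (p:ℝ) * α = π/2 := by rw [hα]; field_simp
  have hσabs : |σ| = 1 := by rcases hσ with h | h <;> simp [h]
  apply squeeze_zero_norm' (a := fun R : ℝ => 1/R)
  · filter_upwards [eventually_ge_atTop (1:ℝ),
      eventually_ge_atTop (π*(|x|+1)/(2*c*t*(p:ℝ)))] with R hR1 hR2
    have hR0 : 0 < R := lt_of_lt_of_le one_pos hR1
    have hM : |x| * R + R^2 ≤ 2*c*t*(p:ℝ)/π*R^p := by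
      have h3 : R^3 ≤ R^p := pow_le_pow_right₀ hR1 (by omega)
      have h2 : π*(|x|+1) ≤ 2*c*t*(p:ℝ)*R := by
        rw [div_le_iff₀ (by positivity)] at hR2
        linarith
      have hR2' : R ≤ R^2 := by nlinarith
      have hxR : |x| * R + R^2 ≤ (|x|+1)*R^2 := by nlinarith [abs_nonneg x]
      have h5 : (|x|+1)*R^2 ≤ 2*c*t*(p:ℝ)/π*R^3 := by
        rw [div_mul_eq_mul_div, le_div_iff₀ hπ]
        nlinarith [sq_nonneg R]
      have h4 : 2*c*t*(p:ℝ)/π*R^3 ≤ 2*c*t*(p:ℝ)/π*R^p :=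
        mul_le_mul_of_nonneg_left h3 (by positivity)
      linarith
    have hbd : ∀ θ ∈ Set.uIoc (0:ℝ) α, ‖(R:ℂ) * Complex.exp ((θ:ℂ)*I) *
        (Complex.exp (I*((σ:ℂ)*((R:ℂ) * Complex.exp ((θ:ℂ)*I)))*(x:ℂ)) *
         Complex.exp (I*(c:ℂ)*(t:ℂ)*((σ:ℂ)*((R:ℂ) * Complex.exp ((θ:ℂ)*I)))^p))‖
        ≤ R * Real.exp (-(R^2)*θ) := by
      intro θ hθ
      rw [Set.uIoc_of_le hα_pos.le] at hθ
      obtain ⟨hθ0, hθα⟩ := hθ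
      set z : ℂ := (σ:ℂ)*((R:ℂ) * Complex.exp ((θ:ℂ)*I)) with hz
      have hz_im : z.im = σ * (R * Real.sin θ) := by
        simp [hz, Complex.mul_im, Complex.exp_ofReal_mul_I_im, Complex.exp_ofReal_mul_I_re]
      have hσp : (σ:ℂ)^p = 1 := by
        rcases hσ with h | h <;> subst h <;> push_cast <;> simp [hpeven.neg_one_pow]
      have hzp : z^p = ((R^p : ℝ):ℂ) * Complex.exp ((((p:ℝ)*θ : ℝ):ℂ)*I) := by
        rw [hz, mul_pow, mul_pow, hσp, one_mul, ← Complex.exp_nat_mul]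
        push_cast
        ring_nf
      have hzp_im : (z^p).im = R^p * Real.sin ((p:ℝ)*θ) := by
        rw [hzp, Complex.im_ofReal_mul, Complex.exp_ofReal_mul_I_im]
      have hA : (I*z*(x:ℂ)).re = -(z.im*x) := by
        simp [Complex.mul_re, Complex.mul_im]
      have hB : (I*(c:ℂ)*(t:ℂ)*z^p).re = -(c*t*(z^p).im) := by
        simp [Complex.mul_re, Complex.mul_im]
      have hsinθ : 0 ≤ Real.sin θ :=
        Real.sin_nonneg_of_nonneg_of_le_pi hθ0.le (by nlinarith)
      have hsinle : Real.sin θ ≤ θ := Real.sin_le hθ0.le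
      have e1 : -(z.im*x) ≤ |x| * R*θ := by
        calc -(z.im*x) ≤ |z.im * x| := neg_le_abs _
          _ = R * Real.sin θ * |x| := by
              rw [hz_im, abs_mul, abs_mul, abs_mul, hσabs, abs_of_pos hR0,
                _root_.abs_of_nonneg hsinθ]; ring
          _ ≤ R * θ * |x| :=
              mul_le_mul_of_nonneg_right (mul_le_mul_of_nonneg_left hsinle hR0.le) (abs_nonneg x)
          _ = |x| * R*θ := by ring
      have hsp : 2/π*((p:ℝ)*θ) ≤ Real.sin ((p:ℝ)*θ) := by
        apply Real.mul_le_sin (by positivity)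
        rw [← hpα]
        exact mul_le_mul_of_nonneg_left hθα hppos.le
      have e2 : -(c*t*(z^p).im) ≤ -(c*t*(R^p*(2/π*((p:ℝ)*θ)))) := by
        rw [hzp_im]
        have := mul_le_mul_of_nonneg_left hsp (by positivity : (0:ℝ) ≤ c*t*R^p)
        nlinarith
      have hexp : (I*z*(x:ℂ)).re + (I*(c:ℂ)*(t:ℂ)*z^p).re ≤ -(R^2)*θ := by
        rw [hA, hB]
        calc -(z.im*x) + -(c*t*(z^p).im)
            ≤ |x| * R*θ - c*t*(R^p*(2/π*((p:ℝ)*θ))) := by linarith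
          _ = θ*(|x| * R - 2*c*t*(p:ℝ)/π*R^p) := by ring
          _ ≤ θ*(-(R^2)) := mul_le_mul_of_nonneg_left (by linarith) hθ0.le
          _ = -(R^2)*θ := by ring
      have hnorm : ‖(R:ℂ) * Complex.exp ((θ:ℂ)*I) *
          (Complex.exp (I*z*(x:ℂ)) * Complex.exp (I*(c:ℂ)*(t:ℂ)*z^p))‖
          = R * Real.exp ((I*z*(x:ℂ)).re + (I*(c:ℂ)*(t:ℂ)*z^p).re) := by
        rw [norm_mul, norm_mul, norm_mul]
        simp only [Complex.norm_exp, Complex.norm_exp_ofReal_mul_I,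
          Complex.norm_real, Real.norm_eq_abs, abs_of_pos hR0, Real.exp_add, mul_one]
        simp [Complex.mul_re]
      rw [hnorm]
      exact mul_le_mul_of_nonneg_left (Real.exp_le_exp.mpr hexp) hR0.le
    have hIb := intervalIntegral.norm_integral_le_abs_of_norm_le (μ := volume)
      ((ae_restrict_iff' measurableSet_uIoc).mpr (Filter.Eventually.of_forall hbd))
      ((continuous_const.mul (Real.continuous_exp.comp
        (continuous_const.mul continuous_id))).intervalIntegrable 0 α)
    have hval : (∫ θ in (0:ℝ)..α, R * Real.exp (-(R^2)*θ))
        = R * ((1 - Real.exp (-(R^2)*α))/R^2) := by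
      rw [intervalIntegral.integral_const_mul]
      congr 1
      have hF : ∀ u ∈ Set.uIcc (0:ℝ) α, HasDerivAt (fun u : ℝ => -(R^2)⁻¹ * Real.exp (-(R^2)*u))
          (Real.exp (-(R^2)*u)) u := by
        intro u _
        have h := (((hasDerivAt_id u).const_mul (-(R^2))).exp).const_mul (-(R^2)⁻¹)
        refine h.congr_deriv ?_
        simp only [id, mul_one]; field_simp
      rw [intervalIntegral.integral_eq_sub_of_hasDerivAt hF
        ((Real.continuous_exp.comp (continuous_const.mul continuous_id)).intervalIntegrable 0 α)]
      field_simp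
      ring_nf; simp only [Real.exp_zero]; ring
    have hble : R * ((1 - Real.exp (-(R^2)*α))/R^2) ≤ 1/R := by
      have h1 : 1 - Real.exp (-(R^2)*α) ≤ 1 := by linarith [Real.exp_nonneg (-(R^2)*α)]
      have heq : R * ((1 - Real.exp (-(R^2)*α))/R^2) = (1 - Real.exp (-(R^2)*α))/R := by
        field_simp
      rw [heq]
      exact (div_le_div_iff_of_pos_right hR0).mpr h1
    have hexp1 : Real.exp (-(R^2)*α) ≤ 1 := Real.exp_le_one_iff.mpr (by nlinarith)
    have habs : |∫ θ in (0:ℝ)..α, R * Real.exp (-(R^2)*θ)|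
        = R * ((1 - Real.exp (-(R^2)*α))/R^2) := by
      rw [hval, _root_.abs_of_nonneg (mul_nonneg hR0.le (div_nonneg (by linarith) (sq_nonneg R)))]
    calc ‖I * ∫ θ in (0:ℝ)..α, (R:ℂ) * Complex.exp ((θ:ℂ)*I) *
        (Complex.exp (I*((σ:ℂ)*((R:ℂ) * Complex.exp ((θ:ℂ)*I)))*(x:ℂ)) *
         Complex.exp (I*(c:ℂ)*(t:ℂ)*((σ:ℂ)*((R:ℂ) * Complex.exp ((θ:ℂ)*I)))^p))‖
        = ‖∫ θ in (0:ℝ)..α, (R:ℂ) * Complex.exp ((θ:ℂ)*I) *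
        (Complex.exp (I*((σ:ℂ)*((R:ℂ) * Complex.exp ((θ:ℂ)*I)))*(x:ℂ)) *
         Complex.exp (I*(c:ℂ)*(t:ℂ)*((σ:ℂ)*((R:ℂ) * Complex.exp ((θ:ℂ)*I)))^p))‖ := by
          rw [norm_mul, Complex.norm_I, one_mul]
      _ ≤ |∫ θ in (0:ℝ)..α, R * Real.exp (-(R^2)*θ)| := hIb
      _ = R * ((1 - Real.exp (-(R^2)*α))/R^2) := habs
      _ ≤ 1/R := hble
  · simpa only [one_div] using tendsto_inv_atTop_zero

/-- For `p ≥ 3` even, `c > 0`, `t > 0`, the principal-value limit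
`lim_{R→∞} (1/2π) ∫_{-R}^R e^{ikx} e^{ict k^p} dk` exists and equals
`(e^{iπ/(2p)}/2π) ∫_ℝ exp(i e^{iπ/(2p)} k x) exp(-ct k^p) dk`, the latter integral being
absolutely convergent. -/
theorem stmt_1 (p : ℕ) (hp : 3 ≤ p) (hpeven : Even p) (c t x : ℝ) (hc : 0 < c) (ht : 0 < t) :
    Integrable (fun k : ℝ =>
      Complex.exp (I * (Complex.exp (I * π / (2 * p)) * k * x)) *
        Complex.exp (-(c * t) * k ^ p)) ∧
    Tendsto
      (fun R : ℝ => (1 / (2 * π) : ℂ) *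
        ∫ k in (-R)..R, Complex.exp (I * k * x) * Complex.exp (I * c * t * k ^ p))
      atTop
      (nhds ((Complex.exp (I * π / (2 * p)) / (2 * π)) *
        ∫ k : ℝ, Complex.exp (I * (Complex.exp (I * π / (2 * p)) * k * x)) *
          Complex.exp (-(c * t) * k ^ p))) := by
  have hπ := Real.pi_pos
  have hppos : 0 < (p:ℝ) := by positivity
  have hpc0 : ((p:ℕ):ℂ) ≠ 0 := by
    simp only [ne_eq, Nat.cast_eq_zero]; omega
  set α : ℝ := π/(2*(p:ℝ)) with hα
  have harg : I * (π:ℂ) / (2 * (p:ℂ)) = ((α:ℝ):ℂ) * I := by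
    rw [hα]; push_cast; field_simp
  rw [harg]
  set w : ℂ := Complex.exp (((α:ℝ):ℂ) * I) with hwdef
  set f : ℂ → ℂ := fun z => Complex.exp (I*z*(x:ℂ)) * Complex.exp (I*(c:ℂ)*(t:ℂ)*z^p) with hf_def
  set g : ℝ → ℂ := fun k : ℝ => Complex.exp (I * (w * (k:ℂ) * (x:ℂ))) *
    Complex.exp (-((c:ℂ) * (t:ℂ)) * (k:ℂ)^p) with hg_def
  clear_value α w f g
  have hf : Differentiable ℂ f := by rw [hf_def]; fun_prop
  have hgcont : Continuous g := by rw [hg_def]; fun_prop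
  have hfRcont : Continuous fun k : ℝ => f (k:ℂ) := hf.continuous.comp Complex.continuous_ofReal
  have hfRcont' : Continuous fun k : ℝ => f (-(k:ℂ)) :=
    hf.continuous.comp (Complex.continuous_ofReal.neg)
  -- norm of g
  have hs : |Real.sin α| ≤ 1 := abs_le.mpr ⟨Real.neg_one_le_sin α, Real.sin_le_one α⟩
  have hnormg : ∀ k : ℝ, ‖g k‖ = Real.exp (-(k*x*Real.sin α) - c*t*k^p) := by
    intro k
    rw [hg_def]
    simp only [norm_mul, Complex.norm_exp]
    rw [← Real.exp_add]
    congr 1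
    have h1 : (I * (w * (k:ℂ) * (x:ℂ))).re = -(k*x*Real.sin α) := by
      rw [hwdef]
      simp [Complex.mul_re, Complex.mul_im, Complex.exp_ofReal_mul_I_im,
        Complex.exp_ofReal_mul_I_re]
      ring
    have h2 : ((-((c:ℂ)*(t:ℂ))) * (k:ℂ)^p).re = -(c*t*k^p) := by
      have h : ((-((c:ℂ)*(t:ℂ))) * (k:ℂ)^p) = ((-(c*t*k^p) : ℝ) : ℂ) := by push_cast; ring
      rw [h, Complex.ofReal_re]
    rw [h1, h2]
    ring
  have key : ∀ k : ℝ, -(k*x*Real.sin α) - c*t*k^p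
      ≤ (c*t + x^2/(2*(c*t))) + (-(c*t/2)*k^2) := by
    intro k
    have hb : 0 < c*t := mul_pos hc ht
    rcases le_or_gt (|k|) 1 with hk | hk
    · have h1 : 0 ≤ k^p := hpeven.pow_nonneg k
      have h2 : k^2 ≤ 1 := by nlinarith [abs_nonneg k, _root_.sq_abs k]
      have h3 : -(k*x*Real.sin α) ≤ |x| := by
        have habs : |k * x * Real.sin α| ≤ |x| := by
          rw [abs_mul, abs_mul]
          calc |k| * |x| * |Real.sin α| ≤ 1 * |x| * 1 := by
                apply mul_le_mul _ hs (abs_nonneg _) (by positivity)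
                exact mul_le_mul hk le_rfl (abs_nonneg x) zero_le_one
            _ = |x| := by ring
        linarith [neg_le_abs (k * x * Real.sin α)]
      have hb2 : (0:ℝ) < 2*(c*t) := by positivity
      have hexp : (2*(c*t)) * ((c*t + x^2/(2*(c*t))) + (-(c*t/2)*k^2))
          = 2*(c*t)*(c*t) + x^2 - (c*t)*(c*t)*k^2 := by field_simp; ring
      refine (mul_le_mul_iff_right₀ hb2).mp ?_
      rw [hexp]
      nlinarith [sq_nonneg (|x| - c*t), _root_.sq_abs x, mul_pos hc ht]
    · have hk1 : 1 ≤ |k| := hk.le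
      have h1 : k^2 ≤ k^p := by
        calc k^2 = |k|^2 := (_root_.sq_abs k).symm
          _ ≤ |k|^p := pow_le_pow_right₀ hk1 (by omega)
          _ = k^p := hpeven.pow_abs k
      have h3 : -(k*x*Real.sin α) ≤ |x| * |k| := by
        have habs : |k * x * Real.sin α| ≤ |x| * |k| := by
          rw [abs_mul, abs_mul]
          calc |k| * |x| * |Real.sin α| ≤ |k| * |x| * 1 :=
                mul_le_mul_of_nonneg_left hs (by positivity)
            _ = |x| * |k| := by ring
        linarith [neg_le_abs (k * x * Real.sin α)]
      have hb2 : (0:ℝ) < 2*(c*t) := by positivity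
      have hexp : (2*(c*t)) * ((c*t + x^2/(2*(c*t))) + (-(c*t/2)*k^2))
          = 2*(c*t)*(c*t) + x^2 - (c*t)*(c*t)*k^2 := by field_simp; ring
      refine (mul_le_mul_iff_right₀ hb2).mp ?_
      rw [hexp]
      nlinarith [sq_nonneg (c*t*|k| - |x|), _root_.sq_abs k, _root_.sq_abs x,
        mul_le_mul_of_nonneg_left h1 (by positivity : (0:ℝ) ≤ (c*t)*(c*t)),
        mul_le_mul_of_nonneg_left h3 hb2.le, mul_pos hc ht]
  have hgInt : Integrable g := by
    apply Integrable.mono'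
      ((integrable_exp_neg_mul_sq (show (0:ℝ) < c*t/2 by positivity)).const_mul
        (Real.exp (c*t + x^2/(2*(c*t)))))
      hgcont.aestronglyMeasurable
    filter_upwards with k
    rw [hnormg k, ← Real.exp_add]
    exact Real.exp_le_exp.mpr (key k)
  refine ⟨hgInt, ?_⟩
  -- contour rotation identities
  have hwp : w^p = I := by
    rw [hwdef, ← Complex.exp_nat_mul]
    have h : (p:ℂ) * (((α:ℝ):ℂ) * I) = ((π/2 : ℝ):ℂ) * I := by
      rw [hα]; push_cast; field_simp
    rw [h]
    simp [Complex.exp_mul_I]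
  have hfw : ∀ k : ℝ, f (w * (k:ℂ)) = g k := by
    intro k
    rw [hf_def, hg_def]
    simp only
    have h1 : I * (w*(k:ℂ)) * (x:ℂ) = I * (w * (k:ℂ) * (x:ℂ)) := by ring
    have h2 : I*(c:ℂ)*(t:ℂ)*(w*(k:ℂ))^p = -((c:ℂ)*(t:ℂ))*((k:ℂ))^p := by
      rw [mul_pow, hwp,
        show I*(c:ℂ)*(t:ℂ)*(I*((k:ℂ))^p) = (I*I)*((c:ℂ)*(t:ℂ)*((k:ℂ))^p) from by ring,
        Complex.I_mul_I]
      ring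
    rw [h1, h2]
  have hfwneg : ∀ k : ℝ, f (-(w * (k:ℂ))) = g (-k) := by
    intro k
    have h : -(w * (k:ℂ)) = w * ((-k : ℝ):ℂ) := by push_cast; ring
    rw [h, hfw (-k)]
  -- the main identity for each R
  set A1 : ℝ → ℂ := fun R => I * ∫ θ in (0:ℝ)..α,
    (R:ℂ) * Complex.exp ((θ:ℂ)*I) * f ((R:ℂ) * Complex.exp ((θ:ℂ)*I)) with hA1
  set A2 : ℝ → ℂ := fun R => I * ∫ θ in (0:ℝ)..α,
    (R:ℂ) * Complex.exp ((θ:ℂ)*I) * f (-((R:ℂ) * Complex.exp ((θ:ℂ)*I))) with hA2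
  clear_value A1 A2
  have main_id : ∀ R : ℝ, (∫ k in (-R)..R, f (k:ℂ))
      = w * (∫ k in (-R)..R, g k) - A1 R - A2 R := by
    intro R
    have hsplit : (∫ k in (-R)..R, f (k:ℂ))
        = (∫ k in (-R)..(0:ℝ), f (k:ℂ)) + ∫ k in (0:ℝ)..R, f (k:ℂ) :=
      (intervalIntegral.integral_add_adjacent_intervals (hfRcont.intervalIntegrable _ _)
        (hfRcont.intervalIntegrable _ _)).symm
    have hneg : (∫ k in (-R)..(0:ℝ), f (k:ℂ)) = ∫ k in (0:ℝ)..R, f (-(k:ℂ)) := by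
      have h := intervalIntegral.integral_comp_neg (a := (0:ℝ)) (b := R)
        (f := fun k : ℝ => f (k:ℂ))
      simp only [neg_zero] at h
      rw [← h]
      apply intervalIntegral.integral_congr
      intro u _
      simp [Complex.ofReal_neg]
    have hsplitg : (∫ k in (-R)..R, g k)
        = (∫ k in (0:ℝ)..R, g (-k)) + ∫ k in (0:ℝ)..R, g k := by
      rw [← (intervalIntegral.integral_add_adjacent_intervals
        (hgcont.intervalIntegrable (-R) 0) (hgcont.intervalIntegrable 0 R))]
      congr 1
      have h := intervalIntegral.integral_comp_neg (a := (0:ℝ)) (b := R) (f := g)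
      simp only [neg_zero] at h
      rw [h]
    have E1 : w * (∫ k in (0:ℝ)..R, f (w * (k:ℂ))) - ∫ k in (0:ℝ)..R, f (k:ℂ) = A1 R := by
      rw [hwdef, hA1]; exact rotate_contour f hf R α
    have E2 : w * (∫ k in (0:ℝ)..R, f (-(w * (k:ℂ)))) - ∫ k in (0:ℝ)..R, f (-(k:ℂ)) = A2 R := by
      rw [hwdef, hA2]; exact rotate_contour (fun z => f (-z)) (hf.comp differentiable_id.neg) R α
    have hgpos : (∫ k in (0:ℝ)..R, f (w * (k:ℂ))) = ∫ k in (0:ℝ)..R, g k :=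
      intervalIntegral.integral_congr (fun k _ => hfw k)
    have hgneg : (∫ k in (0:ℝ)..R, f (-(w * (k:ℂ)))) = ∫ k in (0:ℝ)..R, g (-k) :=
      intervalIntegral.integral_congr (fun k _ => hfwneg k)
    rw [hsplit, hneg, hsplitg]
    rw [hgpos] at E1
    rw [hgneg] at E2
    linear_combination -E1 - E2
  -- limits
  have T1 : Tendsto (fun R : ℝ => ∫ k in (-R)..R, g k) atTop (nhds (∫ k : ℝ, g k)) :=
    intervalIntegral_tendsto_integral hgInt tendsto_neg_atTop_atBot tendsto_id
  have T2 : Tendsto A1 atTop (nhds 0) := by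
    apply (arc_tendsto p hp hpeven c t x hc ht 1 (Or.inl rfl)).congr
    intro R
    simp only [hA1]
    rw [← hα]
    congr 1
    apply intervalIntegral.integral_congr
    intro θ _
    rw [hf_def]
    push_cast
    simp
  have T3 : Tendsto A2 atTop (nhds 0) := by
    apply (arc_tendsto p hp hpeven c t x hc ht (-1) (Or.inr rfl)).congr
    intro R
    simp only [hA2]
    rw [← hα]
    congr 1
    apply intervalIntegral.integral_congr
    intro θ _
    rw [hf_def]
    push_cast
    ring_nf
  have Tfin := (((T1.const_mul w).sub T2).sub T3).const_mul ((1:ℂ)/(2*(π:ℂ)))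
  have Tfin2 : Tendsto (fun R : ℝ => ((1:ℂ)/(2*(π:ℂ))) * ∫ k in (-R)..R, f (k:ℂ)) atTop
      (nhds (((1:ℂ)/(2*(π:ℂ))) * (w * (∫ k : ℝ, g k) - 0 - 0))) := by
    apply Tfin.congr
    intro R
    rw [main_id R]
  have hval : (w/(2*(π:ℂ))) * (∫ k : ℝ, g k)
      = ((1:ℂ)/(2*(π:ℂ))) * (w * (∫ k : ℝ, g k) - 0 - 0) := by ring
  rw [show w / (2*(π:ℂ)) * (∫ k : ℝ, g k)
      = ((1:ℂ)/(2*(π:ℂ))) * (w * (∫ k : ℝ, g k) - 0 - 0) from hval]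
  apply Tfin2.congr
  intro R
  congr 1
  apply intervalIntegral.integral_congr
  intro k _
  rw [hf_def]
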